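/- With λ₁,…,λₙ ∈ ℝ, the vector fields K₊ = −∂₊, K₋ = −∂₋, K_{(i)} = cos(λ_i x⁻)∂_i + λ_i sin(λ_i x⁻) x^i ∂₊, K_{(i*)} = −λ_i sin(λ_i x⁻)∂_i + λ_i² cos(λ_i x⁻) x^i ∂₊, and K_{(ij)} = x^j∂_i − x^i∂_j on ℝ^{n+2} satisfy the commutation relations: [K₋, K_{(i)}] = −K_{(i*)}; [K₋, K_{(i*)}] = λ_i² K_{(i)}; [K_{(i*)}, K_{(j)}] = δ_{ij} λ_i² K₊; [K_{(i)}, K_{(j)}] = 0; [K_{(i*)}, K_{(j*)}] = 0; [K₊, K] = 0 for every K in the list; and, whenever λ_i = λ_j = λ_k, [K_{(ij)}, K_{(k)}] = −δ_{kj}K_{(i)} + δ_{ki}K_{(j)} and [K_{(ij)}, K_{(k*)}] = −δ_{kj}K_{(i*)} + δ_{ki}K_{(j*)}. Here [X,Y] denotes the commutator of vector fields, [X,Y]^μ = ∑_ν X^ν∂_ν Y^μ − Y^ν∂_ν X^μ. -/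

import Mathlib

/-- Index type for the coordinates `(x⁺, x⁻, x¹, …, xⁿ)` on `ℝ^{n+2}`:
`Sum.inl 0` is the index `+`, `Sum.inl 1` is the index `−`, and `Sum.inr i` is `i`. -/
abbrev CWIdx (n : ℕ) : Type := Fin 2 ⊕ Fin n

/-- Points of `ℝ^{n+2}`. -/
abbrev CWPt (n : ℕ) : Type := CWIdx n → ℝ

/-- The commutator of two vector fields on `ℝ^{n+2}`:
`[X,Y]^μ = ∑_ν X^ν ∂_ν Y^μ − Y^ν ∂_ν X^μ`. -/
noncomputable def vBracket {n : ℕ} (X Y : CWPt n → CWPt n) (x : CWPt n) : CWPt n :=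
  fun μ => ∑ ν, (X x ν * fderiv ℝ (fun y => Y y μ) x (Pi.single ν 1)
    - Y x ν * fderiv ℝ (fun y => X y μ) x (Pi.single ν 1))

/-- `K₊ = −∂₊`. -/
noncomputable def Kplus {n : ℕ} : CWPt n → CWPt n := fun _ => -Pi.single (Sum.inl 0) 1

/-- `K₋ = −∂₋`. -/
noncomputable def Kminus {n : ℕ} : CWPt n → CWPt n := fun _ => -Pi.single (Sum.inl 1) 1

/-- `K_{(i)} = cos(λ_i x⁻)∂_i + λ_i sin(λ_i x⁻) x^i ∂₊`. -/
noncomputable def Ki {n : ℕ} (lam : Fin n → ℝ) (i : Fin n) : CWPt n → CWPt n := fun x =>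
  Pi.single (Sum.inr i) (Real.cos (lam i * x (Sum.inl 1)))
    + Pi.single (Sum.inl 0) (lam i * Real.sin (lam i * x (Sum.inl 1)) * x (Sum.inr i))

/-- `K_{(i*)} = −λ_i sin(λ_i x⁻)∂_i + λ_i² cos(λ_i x⁻) x^i ∂₊`. -/
noncomputable def Kistar {n : ℕ} (lam : Fin n → ℝ) (i : Fin n) : CWPt n → CWPt n := fun x =>
  Pi.single (Sum.inr i) (-(lam i * Real.sin (lam i * x (Sum.inl 1))))
    + Pi.single (Sum.inl 0) (lam i ^ 2 * Real.cos (lam i * x (Sum.inl 1)) * x (Sum.inr i))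

/-- `K_{(ij)} = x^j ∂_i − x^i ∂_j`. -/
noncomputable def Kij {n : ℕ} (i j : Fin n) : CWPt n → CWPt n := fun x =>
  Pi.single (Sum.inr i) (x (Sum.inr j)) - Pi.single (Sum.inr j) (x (Sum.inr i))

section KillingAux

variable {n : ℕ}

noncomputable def Wf {n : ℕ} (a : CWIdx n) (f : ℝ → ℝ) : CWPt n → CWPt n :=
  fun x => Pi.single a (f (x (Sum.inl 1)))

noncomputable def Vf {n : ℕ} (a b : CWIdx n) (f : ℝ → ℝ) : CWPt n → CWPt n :=
  fun x => Pi.single a (f (x (Sum.inl 1)) * x b)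

variable {n : ℕ}

lemma hasFDerivAt_proj (a : CWIdx n) (x : CWPt n) :
    HasFDerivAt (fun y : CWPt n => y a) (ContinuousLinearMap.proj (R := ℝ) a) x :=
  (ContinuousLinearMap.proj a : CWPt n →L[ℝ] ℝ).hasFDerivAt

lemma hasFDerivAt_Wcomp (a : CWIdx n) (f : ℝ → ℝ) (f' : ℝ) (x : CWPt n)
    (hf : HasDerivAt f f' (x (Sum.inl 1))) (μ : CWIdx n) :
    HasFDerivAt (fun y : CWPt n => Wf a f y μ)
      ((if μ = a then f' else 0) • ContinuousLinearMap.proj (R := ℝ) (Sum.inl 1)) x := by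
  rcases eq_or_ne μ a with h | h
  · subst h
    have he : (fun y : CWPt n => Wf μ f y μ) = fun y => f (y (Sum.inl 1)) := by
      funext y; simp [Wf]
    rw [he, if_pos rfl]
    exact hf.comp_hasFDerivAt x (hasFDerivAt_proj _ _)
  · have he : (fun y : CWPt n => Wf a f y μ) = fun _ => (0:ℝ) := by
      funext y; simp [Wf, Pi.single_eq_of_ne h]
    rw [he, if_neg h, zero_smul]
    exact hasFDerivAt_const 0 x

lemma hasFDerivAt_Vcomp (a b : CWIdx n) (f : ℝ → ℝ) (f' : ℝ) (x : CWPt n)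
    (hf : HasDerivAt f f' (x (Sum.inl 1))) (μ : CWIdx n) :
    HasFDerivAt (fun y : CWPt n => Vf a b f y μ)
      (if μ = a then
        (f (x (Sum.inl 1)) • ContinuousLinearMap.proj (R := ℝ) b
          + x b • (f' • ContinuousLinearMap.proj (R := ℝ) (Sum.inl 1))) else 0) x := by
  rcases eq_or_ne μ a with h | h
  · subst h
    have he : (fun y : CWPt n => Vf μ b f y μ) = fun y => f (y (Sum.inl 1)) * y b := by
      funext y; simp [Vf]
    rw [he, if_pos rfl]
    exact (hf.comp_hasFDerivAt x (hasFDerivAt_proj _ _)).mul (hasFDerivAt_proj b x)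
  · have he : (fun y : CWPt n => Vf a b f y μ) = fun _ => (0:ℝ) := by
      funext y; simp [Vf, Pi.single_eq_of_ne h]
    rw [he, if_neg h]
    exact hasFDerivAt_const 0 x

lemma fderiv_W_apply (a : CWIdx n) (f : ℝ → ℝ) (f' : ℝ) (x : CWPt n)
    (hf : HasDerivAt f f' (x (Sum.inl 1))) (μ ν : CWIdx n) :
    fderiv ℝ (fun y => Wf a f y μ) x (Pi.single ν 1)
      = (if μ = a then f' else 0) * (Pi.single ν 1 : CWPt n) (Sum.inl 1) := by
  rw [(hasFDerivAt_Wcomp a f f' x hf μ).fderiv]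
  split_ifs <;> simp [smul_eq_mul]

lemma fderiv_V_apply (a b : CWIdx n) (f : ℝ → ℝ) (f' : ℝ) (x : CWPt n)
    (hf : HasDerivAt f f' (x (Sum.inl 1))) (μ ν : CWIdx n) :
    fderiv ℝ (fun y => Vf a b f y μ) x (Pi.single ν 1)
      = if μ = a then
          (f (x (Sum.inl 1)) * (Pi.single ν 1 : CWPt n) b
            + x b * (f' * (Pi.single ν 1 : CWPt n) (Sum.inl 1))) else 0 := by
  rw [(hasFDerivAt_Vcomp a b f f' x hf μ).fderiv]
  split_ifs <;> simp [smul_eq_mul]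

lemma sum_single_mul (c : CWIdx n) (r : ℝ) (F : CWIdx n → ℝ) :
    ∑ ν, (Pi.single c r : CWPt n) ν * F ν = r * F c := by
  rw [Fintype.sum_eq_single c (fun ν hν => by simp [Pi.single_eq_of_ne hν])]
  simp

lemma vBracket_single_single (a c : CWIdx n) (r s : ℝ) (X Y : CWPt n → CWPt n) (x : CWPt n)
    (hX : X x = Pi.single a r) (hY : Y x = Pi.single c s) (μ : CWIdx n) :
    vBracket X Y x μ = r * fderiv ℝ (fun y => Y y μ) x (Pi.single a 1)
      - s * fderiv ℝ (fun y => X y μ) x (Pi.single c 1) := by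
  simp only [vBracket, hX, hY, Finset.sum_sub_distrib]
  rw [sum_single_mul a r, sum_single_mul c s]

lemma vBracket_WW (a c : CWIdx n) (f g f' g' : ℝ → ℝ)
    (hf : ∀ t, HasDerivAt f (f' t) t) (hg : ∀ t, HasDerivAt g (g' t) t) :
    vBracket (Wf a f) (Wf c g)
      = (if a = Sum.inl 1 then (1:ℝ) else 0) • Wf c (fun t => f t * g' t)
        - (if c = Sum.inl 1 then (1:ℝ) else 0) • Wf a (fun t => g t * f' t) := by
  funext x μ
  rw [vBracket_single_single a c _ _ _ _ x rfl rfl μ,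
    fderiv_W_apply c g (g' _) x (hg _) μ a, fderiv_W_apply a f (f' _) x (hf _) μ c]
  simp only [Wf, Pi.sub_apply, Pi.smul_apply, smul_eq_mul, Pi.single_apply]
  clear hf hg
  split_ifs <;> subst_vars <;> (try ring1) <;> simp_all

lemma vBracket_WV (a c b : CWIdx n) (f g f' g' : ℝ → ℝ)
    (hf : ∀ t, HasDerivAt f (f' t) t) (hg : ∀ t, HasDerivAt g (g' t) t) :
    vBracket (Wf a f) (Vf c b g)
      = (if a = Sum.inl 1 then (1:ℝ) else 0) • Vf c b (fun t => f t * g' t)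
        + (if a = b then (1:ℝ) else 0) • Wf c (fun t => f t * g t)
        - (if c = Sum.inl 1 then (1:ℝ) else 0) • Vf a b (fun t => g t * f' t) := by
  funext x μ
  rw [vBracket_single_single a c _ _ _ _ x rfl rfl μ,
    fderiv_V_apply c b g (g' _) x (hg _) μ a, fderiv_W_apply a f (f' _) x (hf _) μ c]
  simp only [Wf, Vf, Pi.sub_apply, Pi.add_apply, Pi.smul_apply, smul_eq_mul, Pi.single_apply]
  clear hf hg
  split_ifs <;> subst_vars <;> (try ring1) <;> simp_all

lemma vBracket_VW (a b c : CWIdx n) (f g f' g' : ℝ → ℝ)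
    (hf : ∀ t, HasDerivAt f (f' t) t) (hg : ∀ t, HasDerivAt g (g' t) t) :
    vBracket (Vf a b f) (Wf c g)
      = (if a = Sum.inl 1 then (1:ℝ) else 0) • Vf c b (fun t => f t * g' t)
        - (if c = Sum.inl 1 then (1:ℝ) else 0) • Vf a b (fun t => g t * f' t)
        - (if c = b then (1:ℝ) else 0) • Wf a (fun t => g t * f t) := by
  funext x μ
  rw [vBracket_single_single a c _ _ _ _ x rfl rfl μ,
    fderiv_W_apply c g (g' _) x (hg _) μ a, fderiv_V_apply a b f (f' _) x (hf _) μ c]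
  simp only [Wf, Vf, Pi.sub_apply, Pi.add_apply, Pi.smul_apply, smul_eq_mul, Pi.single_apply]
  clear hf hg
  split_ifs <;> subst_vars <;> (try ring1) <;> simp_all

lemma vBracket_VV (a b c d : CWIdx n) (f g f' g' : ℝ → ℝ)
    (hf : ∀ t, HasDerivAt f (f' t) t) (hg : ∀ t, HasDerivAt g (g' t) t)
    (ha : a ≠ Sum.inl 1) (hc : c ≠ Sum.inl 1) :
    vBracket (Vf a b f) (Vf c d g)
      = (if a = d then (1:ℝ) else 0) • Vf c b (fun t => f t * g t)
        - (if c = b then (1:ℝ) else 0) • Vf a d (fun t => f t * g t) := by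
  funext x μ
  rw [vBracket_single_single a c _ _ _ _ x rfl rfl μ,
    fderiv_V_apply c d g (g' _) x (hg _) μ a, fderiv_V_apply a b f (f' _) x (hf _) μ c]
  simp only [Wf, Vf, Pi.sub_apply, Pi.add_apply, Pi.smul_apply, smul_eq_mul, Pi.single_apply]
  clear hf hg
  split_ifs <;> subst_vars <;> (try ring1) <;> simp_all

lemma Wf_diff (a : CWIdx n) (f f' : ℝ → ℝ) (hf : ∀ t, HasDerivAt f (f' t) t) :
    ∀ (μ : CWIdx n) (x : CWPt n), DifferentiableAt ℝ (fun y : CWPt n => Wf a f y μ) x :=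
  fun μ x => (hasFDerivAt_Wcomp a f (f' _) x (hf _) μ).differentiableAt

lemma Vf_diff (a b : CWIdx n) (f f' : ℝ → ℝ) (hf : ∀ t, HasDerivAt f (f' t) t) :
    ∀ (μ : CWIdx n) (x : CWPt n), DifferentiableAt ℝ (fun y : CWPt n => Vf a b f y μ) x :=
  fun μ x => (hasFDerivAt_Vcomp a b f (f' _) x (hf _) μ).differentiableAt

lemma vBracket_add_left (X₁ X₂ Y : CWPt n → CWPt n)
    (h₁ : ∀ (μ : CWIdx n) (x : CWPt n), DifferentiableAt ℝ (fun y => X₁ y μ) x)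
    (h₂ : ∀ (μ : CWIdx n) (x : CWPt n), DifferentiableAt ℝ (fun y => X₂ y μ) x) :
    vBracket (X₁ + X₂) Y = vBracket X₁ Y + vBracket X₂ Y := by
  funext x μ
  have hd : (fun y => (X₁ + X₂) y μ) = fun y => X₁ y μ + X₂ y μ := rfl
  simp only [vBracket, Pi.add_apply, hd, fderiv_fun_add (h₁ μ x) (h₂ μ x),
    ContinuousLinearMap.add_apply]
  rw [← Finset.sum_add_distrib]
  exact Finset.sum_congr rfl fun ν _ => by ring

lemma vBracket_add_right (X Y Z : CWPt n → CWPt n)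
    (h₁ : ∀ (μ : CWIdx n) (x : CWPt n), DifferentiableAt ℝ (fun y => Y y μ) x)
    (h₂ : ∀ (μ : CWIdx n) (x : CWPt n), DifferentiableAt ℝ (fun y => Z y μ) x) :
    vBracket X (Y + Z) = vBracket X Y + vBracket X Z := by
  funext x μ
  have hd : (fun y => (Y + Z) y μ) = fun y => Y y μ + Z y μ := rfl
  simp only [vBracket, Pi.add_apply, hd, fderiv_fun_add (h₁ μ x) (h₂ μ x),
    ContinuousLinearMap.add_apply]
  rw [← Finset.sum_add_distrib]
  exact Finset.sum_congr rfl fun ν _ => by ring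

lemma hd_cos (c t : ℝ) :
    HasDerivAt (fun t => Real.cos (c * t)) (-(c * Real.sin (c * t))) t := by
  simpa [mul_comm, Function.comp_def] using (Real.hasDerivAt_cos (c * t)).comp t ((hasDerivAt_id t).const_mul c)

lemma hd_sin (c t : ℝ) :
    HasDerivAt (fun t => Real.sin (c * t)) (c * Real.cos (c * t)) t := by
  simpa [mul_comm, Function.comp_def] using (Real.hasDerivAt_sin (c * t)).comp t ((hasDerivAt_id t).const_mul c)

lemma Kplus_eq : (Kplus : CWPt n → CWPt n) = Wf (Sum.inl 0) (fun _ => -1) := by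
  funext x μ
  simp only [Kplus, Wf, Pi.neg_apply, Pi.single_apply]
  split_ifs <;> simp

lemma Kminus_eq : (Kminus : CWPt n → CWPt n) = Wf (Sum.inl 1) (fun _ => -1) := by
  funext x μ
  simp only [Kminus, Wf, Pi.neg_apply, Pi.single_apply]
  split_ifs <;> simp

lemma Ki_eq (lam : Fin n → ℝ) (i : Fin n) :
    Ki lam i = Wf (Sum.inr i) (fun t => Real.cos (lam i * t))
      + Vf (Sum.inl 0) (Sum.inr i) (fun t => lam i * Real.sin (lam i * t)) := rfl

lemma Kistar_eq (lam : Fin n → ℝ) (i : Fin n) :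
    Kistar lam i = Wf (Sum.inr i) (fun t => -(lam i * Real.sin (lam i * t)))
      + Vf (Sum.inl 0) (Sum.inr i) (fun t => lam i ^ 2 * Real.cos (lam i * t)) := rfl

lemma Kij_eq (i j : Fin n) :
    Kij i j = Vf (Sum.inr i) (Sum.inr j) (fun _ => 1)
      + Vf (Sum.inr j) (Sum.inr i) (fun _ => -1) := by
  funext x μ
  simp only [Kij, Vf, Pi.sub_apply, Pi.add_apply, Pi.single_apply, one_mul, neg_one_mul]
  split_ifs <;> ring

lemma hd_S (c : ℝ) : ∀ t, HasDerivAt (fun t => c * Real.sin (c * t)) (c * (c * Real.cos (c * t))) t :=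
  fun t => (hd_sin c t).const_mul c
lemma hd_Sneg (c : ℝ) : ∀ t, HasDerivAt (fun t => -(c * Real.sin (c * t))) (-(c * (c * Real.cos (c * t)))) t :=
  fun t => (hd_S c t).neg
lemma hd_C2 (c : ℝ) : ∀ t, HasDerivAt (fun t => c ^ 2 * Real.cos (c * t)) (c ^ 2 * -(c * Real.sin (c * t))) t :=
  fun t => (hd_cos c t).const_mul (c ^ 2)
lemma hd_cst (c : ℝ) : ∀ t : ℝ, HasDerivAt (fun _ : ℝ => c) 0 t := fun t => hasDerivAt_const t c

lemma br1 (lam : Fin n → ℝ) (i : Fin n) :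
    vBracket Kminus (Ki lam i) = -(Kistar lam i) := by
  rw [Kminus_eq, Ki_eq,
    vBracket_add_right _ _ _ (Wf_diff _ _ _ (hd_cos (lam i))) (Vf_diff _ _ _ _ (hd_S (lam i))),
    vBracket_WW _ _ _ _ _ _ (hd_cst (-1)) (hd_cos (lam i)),
    vBracket_WV _ _ _ _ _ _ _ (hd_cst (-1)) (hd_S (lam i))]
  funext x μ
  simp only [Kistar, Wf, Vf, Pi.add_apply, Pi.sub_apply, Pi.smul_apply, Pi.neg_apply,
    smul_eq_mul, Pi.single_apply]
  split_ifs <;> subst_vars <;> (try ring1) <;> simp_all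

lemma br2 (lam : Fin n → ℝ) (i : Fin n) :
    vBracket Kminus (Kistar lam i) = (lam i ^ 2) • Ki lam i := by
  rw [Kminus_eq, Kistar_eq,
    vBracket_add_right _ _ _ (Wf_diff _ _ _ (hd_Sneg (lam i))) (Vf_diff _ _ _ _ (hd_C2 (lam i))),
    vBracket_WW _ _ _ _ _ _ (hd_cst (-1)) (hd_Sneg (lam i)),
    vBracket_WV _ _ _ _ _ _ _ (hd_cst (-1)) (hd_C2 (lam i))]
  funext x μ
  simp only [Ki, Wf, Vf, Pi.add_apply, Pi.sub_apply, Pi.smul_apply, Pi.neg_apply,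
    smul_eq_mul, Pi.single_apply]
  split_ifs <;> subst_vars <;> (try ring1) <;> simp_all

set_option maxHeartbeats 2000000 in
set_option maxRecDepth 8000 in
lemma br3 (lam : Fin n → ℝ) (i j : Fin n) :
    vBracket (Kistar lam i) (Ki lam j)
      = (if i = j then lam i ^ 2 else 0) • Kplus (n := n) := by
  rw [Kistar_eq, Ki_eq,
    vBracket_add_left _ _ _ (Wf_diff _ _ _ (hd_Sneg (lam i))) (Vf_diff _ _ _ _ (hd_C2 (lam i))),
    vBracket_add_right _ _ _ (Wf_diff _ _ _ (hd_cos (lam j))) (Vf_diff _ _ _ _ (hd_S (lam j))),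
    vBracket_add_right _ _ _ (Wf_diff _ _ _ (hd_cos (lam j))) (Vf_diff _ _ _ _ (hd_S (lam j))),
    vBracket_WW _ _ _ _ _ _ (hd_Sneg (lam i)) (hd_cos (lam j)),
    vBracket_WV _ _ _ _ _ _ _ (hd_Sneg (lam i)) (hd_S (lam j)),
    vBracket_VW _ _ _ _ _ _ _ (hd_C2 (lam i)) (hd_cos (lam j)),
    vBracket_VV _ _ _ _ _ _ _ _ (hd_C2 (lam i)) (hd_S (lam j)) (by simp) (by simp)]
  funext x μ
  simp [Kplus, Wf, Vf, Pi.single_apply]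
  split_ifs <;> subst_vars <;> (try ring1) <;> simp_all [Wf, Vf, Pi.single_apply] <;>
    linear_combination (-(lam j ^ 2)) * Real.sin_sq_add_cos_sq (lam j * x (Sum.inl 1))

set_option maxHeartbeats 2000000 in
lemma br4 (lam : Fin n → ℝ) (i j : Fin n) :
    vBracket (Ki lam i) (Ki lam j) = 0 := by
  rw [Ki_eq lam i, Ki_eq lam j,
    vBracket_add_left _ _ _ (Wf_diff _ _ _ (hd_cos (lam i))) (Vf_diff _ _ _ _ (hd_S (lam i))),
    vBracket_add_right _ _ _ (Wf_diff _ _ _ (hd_cos (lam j))) (Vf_diff _ _ _ _ (hd_S (lam j))),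
    vBracket_add_right _ _ _ (Wf_diff _ _ _ (hd_cos (lam j))) (Vf_diff _ _ _ _ (hd_S (lam j))),
    vBracket_WW _ _ _ _ _ _ (hd_cos (lam i)) (hd_cos (lam j)),
    vBracket_WV _ _ _ _ _ _ _ (hd_cos (lam i)) (hd_S (lam j)),
    vBracket_VW _ _ _ _ _ _ _ (hd_S (lam i)) (hd_cos (lam j)),
    vBracket_VV _ _ _ _ _ _ _ _ (hd_S (lam i)) (hd_S (lam j)) (by simp) (by simp)]
  funext x μ
  simp [Wf, Vf, Pi.single_apply]
  split_ifs <;> subst_vars <;> (try ring1) <;> simp_all [Wf, Vf, Pi.single_apply] <;> ring1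

set_option maxHeartbeats 2000000 in
lemma br5 (lam : Fin n → ℝ) (i j : Fin n) :
    vBracket (Kistar lam i) (Kistar lam j) = 0 := by
  rw [Kistar_eq lam i, Kistar_eq lam j,
    vBracket_add_left _ _ _ (Wf_diff _ _ _ (hd_Sneg (lam i))) (Vf_diff _ _ _ _ (hd_C2 (lam i))),
    vBracket_add_right _ _ _ (Wf_diff _ _ _ (hd_Sneg (lam j))) (Vf_diff _ _ _ _ (hd_C2 (lam j))),
    vBracket_add_right _ _ _ (Wf_diff _ _ _ (hd_Sneg (lam j))) (Vf_diff _ _ _ _ (hd_C2 (lam j))),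
    vBracket_WW _ _ _ _ _ _ (hd_Sneg (lam i)) (hd_Sneg (lam j)),
    vBracket_WV _ _ _ _ _ _ _ (hd_Sneg (lam i)) (hd_C2 (lam j)),
    vBracket_VW _ _ _ _ _ _ _ (hd_C2 (lam i)) (hd_Sneg (lam j)),
    vBracket_VV _ _ _ _ _ _ _ _ (hd_C2 (lam i)) (hd_C2 (lam j)) (by simp) (by simp)]
  funext x μ
  simp [Wf, Vf, Pi.single_apply]
  split_ifs <;> subst_vars <;> (try ring1) <;> simp_all [Wf, Vf, Pi.single_apply] <;> ring1

lemma br6 : vBracket (Kplus (n := n)) Kplus = 0 := by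
  rw [Kplus_eq, vBracket_WW _ _ _ _ _ _ (hd_cst (-1)) (hd_cst (-1))]
  funext x μ
  simp [Wf, Pi.single_apply]

lemma br7 : vBracket (Kplus (n := n)) Kminus = 0 := by
  rw [Kplus_eq, Kminus_eq, vBracket_WW _ _ _ _ _ _ (hd_cst (-1)) (hd_cst (-1))]
  funext x μ
  simp [Wf, Pi.single_apply]

lemma br8 (lam : Fin n → ℝ) (i : Fin n) : vBracket Kplus (Ki lam i) = 0 := by
  rw [Kplus_eq, Ki_eq,
    vBracket_add_right _ _ _ (Wf_diff _ _ _ (hd_cos (lam i))) (Vf_diff _ _ _ _ (hd_S (lam i))),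
    vBracket_WW _ _ _ _ _ _ (hd_cst (-1)) (hd_cos (lam i)),
    vBracket_WV _ _ _ _ _ _ _ (hd_cst (-1)) (hd_S (lam i))]
  funext x μ
  simp [Wf, Vf, Pi.single_apply]

lemma br9 (lam : Fin n → ℝ) (i : Fin n) : vBracket Kplus (Kistar lam i) = 0 := by
  rw [Kplus_eq, Kistar_eq,
    vBracket_add_right _ _ _ (Wf_diff _ _ _ (hd_Sneg (lam i))) (Vf_diff _ _ _ _ (hd_C2 (lam i))),
    vBracket_WW _ _ _ _ _ _ (hd_cst (-1)) (hd_Sneg (lam i)),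
    vBracket_WV _ _ _ _ _ _ _ (hd_cst (-1)) (hd_C2 (lam i))]
  funext x μ
  simp [Wf, Vf, Pi.single_apply]

lemma br10 (i j : Fin n) : vBracket (Kplus (n := n)) (Kij i j) = 0 := by
  rw [Kplus_eq, Kij_eq,
    vBracket_add_right _ _ _ (Vf_diff _ _ _ _ (hd_cst 1)) (Vf_diff _ _ _ _ (hd_cst (-1))),
    vBracket_WV _ _ _ _ _ _ _ (hd_cst (-1)) (hd_cst 1),
    vBracket_WV _ _ _ _ _ _ _ (hd_cst (-1)) (hd_cst (-1))]
  funext x μ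
  simp [Wf, Vf, Pi.single_apply]

set_option maxHeartbeats 2000000 in
lemma br11 (lam : Fin n → ℝ) (i j k : Fin n) (hij : lam i = lam j) (hjk : lam j = lam k) :
    vBracket (Kij i j) (Ki lam k)
      = -((if k = j then (1:ℝ) else 0) • Ki lam i)
        + (if k = i then (1:ℝ) else 0) • Ki lam j := by
  rw [Kij_eq, Ki_eq,
    vBracket_add_left _ _ _ (Vf_diff _ _ _ _ (hd_cst 1)) (Vf_diff _ _ _ _ (hd_cst (-1))),
    vBracket_add_right _ _ _ (Wf_diff _ _ _ (hd_cos (lam k))) (Vf_diff _ _ _ _ (hd_S (lam k))),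
    vBracket_add_right _ _ _ (Wf_diff _ _ _ (hd_cos (lam k))) (Vf_diff _ _ _ _ (hd_S (lam k))),
    vBracket_VW _ _ _ _ _ _ _ (hd_cst 1) (hd_cos (lam k)),
    vBracket_VW _ _ _ _ _ _ _ (hd_cst (-1)) (hd_cos (lam k)),
    vBracket_VV _ _ _ _ _ _ _ _ (hd_cst 1) (hd_S (lam k)) (by simp) (by simp),
    vBracket_VV _ _ _ _ _ _ _ _ (hd_cst (-1)) (hd_S (lam k)) (by simp) (by simp)]
  funext x μ
  simp [Ki, Wf, Vf, Pi.single_apply]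
  split_ifs <;> subst_vars <;> (try ring1) <;> simp_all [Ki, Wf, Vf, Pi.single_apply] <;>
    split_ifs <;> (try ring1) <;> simp_all

set_option maxHeartbeats 2000000 in
lemma br12 (lam : Fin n → ℝ) (i j k : Fin n) (hij : lam i = lam j) (hjk : lam j = lam k) :
    vBracket (Kij i j) (Kistar lam k)
      = -((if k = j then (1:ℝ) else 0) • Kistar lam i)
        + (if k = i then (1:ℝ) else 0) • Kistar lam j := by
  rw [Kij_eq, Kistar_eq,
    vBracket_add_left _ _ _ (Vf_diff _ _ _ _ (hd_cst 1)) (Vf_diff _ _ _ _ (hd_cst (-1))),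
    vBracket_add_right _ _ _ (Wf_diff _ _ _ (hd_Sneg (lam k))) (Vf_diff _ _ _ _ (hd_C2 (lam k))),
    vBracket_add_right _ _ _ (Wf_diff _ _ _ (hd_Sneg (lam k))) (Vf_diff _ _ _ _ (hd_C2 (lam k))),
    vBracket_VW _ _ _ _ _ _ _ (hd_cst 1) (hd_Sneg (lam k)),
    vBracket_VW _ _ _ _ _ _ _ (hd_cst (-1)) (hd_Sneg (lam k)),
    vBracket_VV _ _ _ _ _ _ _ _ (hd_cst 1) (hd_C2 (lam k)) (by simp) (by simp),
    vBracket_VV _ _ _ _ _ _ _ _ (hd_cst (-1)) (hd_C2 (lam k)) (by simp) (by simp)]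
  funext x μ
  simp [Kistar, Wf, Vf, Pi.single_apply]
  split_ifs <;> subst_vars <;> (try ring1) <;> simp_all [Kistar, Wf, Vf, Pi.single_apply] <;>
    split_ifs <;> (try ring1) <;> simp_all

end KillingAux

/-- The commutation relations of the Killing vector fields
`K₊, K₋, K_{(i)}, K_{(i*)}, K_{(ij)}` on `ℝ^{n+2}`. -/
theorem killing_commutation_relations {n : ℕ} (lam : Fin n → ℝ) :
    (∀ i, vBracket Kminus (Ki lam i) = -(Kistar lam i)) ∧
    (∀ i, vBracket Kminus (Kistar lam i) = (lam i ^ 2) • Ki lam i) ∧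
    (∀ i j, vBracket (Kistar lam i) (Ki lam j)
      = (if i = j then lam i ^ 2 else 0) • Kplus (n := n)) ∧
    (∀ i j, vBracket (Ki lam i) (Ki lam j) = 0) ∧
    (∀ i j, vBracket (Kistar lam i) (Kistar lam j) = 0) ∧
    (vBracket (Kplus (n := n)) Kplus = 0) ∧
    (vBracket (Kplus (n := n)) Kminus = 0) ∧
    (∀ i, vBracket Kplus (Ki lam i) = 0) ∧
    (∀ i, vBracket Kplus (Kistar lam i) = 0) ∧
    (∀ i j, vBracket (Kplus (n := n)) (Kij i j) = 0) ∧
    (∀ i j k, lam i = lam j → lam j = lam k →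
      vBracket (Kij i j) (Ki lam k)
        = -((if k = j then (1:ℝ) else 0) • Ki lam i)
          + (if k = i then (1:ℝ) else 0) • Ki lam j) ∧
    (∀ i j k, lam i = lam j → lam j = lam k →
      vBracket (Kij i j) (Kistar lam k)
        = -((if k = j then (1:ℝ) else 0) • Kistar lam i)
          + (if k = i then (1:ℝ) else 0) • Kistar lam j) := by
  exact ⟨br1 lam, br2 lam, br3 lam, br4 lam, br5 lam, br6, br7, br8 lam, br9 lam, br10,
    br11 lam, br12 lam⟩
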